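/- Fix a fusion rule f : V_1 × ⋯ × V_n → Bool. Suppose σ_f ∈ Σ satisfies σ_f ∉ Σ_io for every i and σ_f does not occur in any string of L. Let L' = (L \ K) ∪ { s ++ [σ_f] | s ∈ K }. Then there exist observers f_1,…,f_n (with f_i : Σ* → V_i) such that (f_1,…,f_n) together with f solve the observation problem Obs(f, L, K, (Σ_io)) if and only if there exist observers g_1,…,g_n such that (g_1,…,g_n) together with f solve the diagnosis problem Dx(f, L', (Σ_io), σ_f, 0). (Solvability equivalence of f-observation and f-diagnosis problems, Theorem 3.) -/
import Mathlib


open List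

/-- Natural projection onto a subalphabet: keep only symbols in `A`. -/
def natProj {α : Type*} (A : Set α) [DecidablePred (· ∈ A)] (s : List α) : List α :=
  s.filter (fun a => decide (a ∈ A))

/-- Observers `obs` together with fusion rule `f` solve the observation problem
`Obs(f, L, K, (Sio i))`. -/
def SolvesObs {α : Type*} {n : ℕ} {V : Fin n → Type*} (f : (∀ i, V i) → Bool)
    (obs : ∀ i, List α → V i) (L K : Set (List α))
    (Sio : Fin n → Set α) [∀ i, DecidablePred (· ∈ Sio i)] : Prop :=
  ∀ s ∈ L,
    (s ∈ K → f (fun i => obs i (natProj (Sio i) s)) = true) ∧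
    (s ∈ L \ K → f (fun i => obs i (natProj (Sio i) s)) = false)

/-- `s` is positive (contains the fault event `σf`) for at least `m` steps. -/
def PosSteps {α : Type*} (σf : α) (m : ℕ) (s : List α) : Prop :=
  ∃ π τ : List α, s = π ++ [σf] ++ τ ∧ m ≤ τ.length

/-- Observers `obs` together with fusion rule `f` solve the diagnosis problem
`Dx(f, L, (Sio i), σf, m)`. -/
def SolvesDx {α : Type*} {n : ℕ} {V : Fin n → Type*} (f : (∀ i, V i) → Bool)
    (obs : ∀ i, List α → V i) (L : Set (List α))
    (Sio : Fin n → Set α) [∀ i, DecidablePred (· ∈ Sio i)]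
    (σf : α) (m : ℕ) : Prop :=
  ∀ s ∈ L,
    (PosSteps σf m s → f (fun i => obs i (natProj (Sio i) s)) = true) ∧
    (σf ∉ s → f (fun i => obs i (natProj (Sio i) s)) = false)

/-- Controllers `con σ` together with fusion rules `fus σ`, for `σ ∈ Sc`, solve the
control problem `Con(L, K, (Sio i), Sc)`. -/
def SolvesCon {α : Type*} {n : ℕ} {V : Fin n → Type*} (fus : α → (∀ i, V i) → Bool)
    (con : α → ∀ i, List α → V i) (L K : Set (List α))
    (Sio : Fin n → Set α) [∀ i, DecidablePred (· ∈ Sio i)] (Sc : Set α) : Prop :=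
  ∀ σ ∈ Sc, ∀ s ∈ K,
    (s ++ [σ] ∈ K → fus σ (fun i => con σ i (natProj (Sio i) s)) = true) ∧
    (s ++ [σ] ∈ L \ K → fus σ (fun i => con σ i (natProj (Sio i) s)) = false)

/-- Prefix closure of a language. -/
def pr {α : Type*} (M : Set (List α)) : Set (List α) := {s | ∃ t ∈ M, s <+: t}

/-- `Mγ`: every string of `M` extended by the symbol `γ`. -/
def catSym {α : Type*} (M : Set (List α)) (γ : α) : Set (List α) :=
  {t | ∃ s ∈ M, t = s ++ [γ]}

/-- **Theorem 3 (solvability equivalence of f-Obs and f-Dx).** With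
`L' = (L \ K) ∪ { s ++ [σf] | s ∈ K }`, there exist observers solving
`Obs(f, L, K, (Sio i))` iff there exist observers solving `Dx(f, L', (Sio i), σf, 0)`. -/
theorem obs_solvable_iff_dx_solvable {α : Type*} {n : ℕ} {V : Fin n → Type*}
    (f : (∀ i, V i) → Bool)
    (L K : Set (List α)) (hKL : K ⊆ L)
    (Sio : Fin n → Set α) [∀ i, DecidablePred (· ∈ Sio i)]
    (σf : α) (hσf : ∀ i, σf ∉ Sio i) (hσfL : ∀ s ∈ L, σf ∉ s) :
    (∃ obs : ∀ i, List α → V i, SolvesObs f obs L K Sio) ↔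
      (∃ g : ∀ i, List α → V i,
        SolvesDx f g ((L \ K) ∪ catSym K σf) Sio σf 0) := by
  have hproj : ∀ (i : Fin n) (s : List α),
      natProj (Sio i) (s ++ [σf]) = natProj (Sio i) s := by
    intro i s
    simp [natProj, List.filter_append, hσf i]
  constructor
  · rintro ⟨obs, hobs⟩
    refine ⟨obs, ?_⟩
    intro s hs
    constructor
    · rintro ⟨π, τ, rfl, -⟩
      rcases hs with hs | ⟨t, ht, heq⟩
      · exact absurd (by simp) (hσfL _ hs.1)
      · have hK := (hobs t (hKL ht)).1 ht
        rw [show π ++ [σf] ++ τ = t ++ [σf] from heq] at *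
        simpa [hproj] using hK
    · intro hnot
      rcases hs with hs | ⟨t, ht, heq⟩
      · exact (hobs s hs.1).2 hs
      · exact absurd (by simp [heq]) hnot
  · rintro ⟨g, hg⟩
    refine ⟨g, ?_⟩
    intro s hs
    constructor
    · intro hsK
      have hmem : s ++ [σf] ∈ (L \ K) ∪ catSym K σf := Or.inr ⟨s, hsK, rfl⟩
      have := (hg _ hmem).1 ⟨s, [], by simp, by simp⟩
      simpa [hproj] using this
    · intro hsLK
      exact (hg s (Or.inl hsLK)).2 (hσfL s hs)
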